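/- Let w \ge 0 be even and V_w^+ = { P \in V_w : P(-X,Y) = P(X,Y) }. Then W_w^+ = { P \in V_w^+ : P(X,Y) - P(Y-X, Y) + P(Y-X, X) = 0 }, i.e., for even polynomials the two defining conditions P|(1+S) = 0 and P|(1+U+U^2) = 0 are together equivalent to the single functional equation P(X,Y) - P(Y-X,Y) + P(Y-X,X) = 0. -/
import Mathlib


open MvPolynomial

/-- The slash action `(P|γ)(X,Y) = P(aX+bY, cX+dY)` for `γ = [[a,b],[c,d]]`,
as a linear endomorphism of polynomials in two variables. -/
noncomputable def slashL (a b c d : ℚ) :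
    MvPolynomial (Fin 2) ℚ →ₗ[ℚ] MvPolynomial (Fin 2) ℚ :=
  (MvPolynomial.aeval
    ![a • MvPolynomial.X 0 + b • MvPolynomial.X 1,
      c • MvPolynomial.X 0 + d • MvPolynomial.X 1]).toLinearMap

/-- `V_w`: the space of homogeneous polynomials of degree `w` in `X, Y`. -/
noncomputable def Vw (w : ℕ) : Submodule ℚ (MvPolynomial (Fin 2) ℚ) :=
  MvPolynomial.homogeneousSubmodule (Fin 2) ℚ w

/-- The space of period polynomials
`W_w = { P ∈ V_w : P|(1+S) = 0, P|(1+U+U²) = 0 }`,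
with `S = [[0,-1],[1,0]]`, `U = [[1,-1],[1,0]]`, `U² = [[0,-1],[1,-1]]`. -/
noncomputable def Ww (w : ℕ) : Submodule ℚ (MvPolynomial (Fin 2) ℚ) :=
  Vw w ⊓ LinearMap.ker (LinearMap.id + slashL 0 (-1) 1 0) ⊓
    LinearMap.ker (LinearMap.id + slashL 1 (-1) 1 0 + slashL 0 (-1) 1 (-1))

/-- `W_w⁺ = { P ∈ W_w : P(-X,Y) = P(X,Y) }`. -/
noncomputable def WwPlus (w : ℕ) : Submodule ℚ (MvPolynomial (Fin 2) ℚ) :=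
  Ww w ⊓ LinearMap.ker (slashL (-1) 0 0 1 - LinearMap.id)

/-- `W_w⁻ = { P ∈ W_w : P(-X,Y) = -P(X,Y) }`. -/
noncomputable def WwMinus (w : ℕ) : Submodule ℚ (MvPolynomial (Fin 2) ℚ) :=
  Ww w ⊓ LinearMap.ker (slashL (-1) 0 0 1 + LinearMap.id)

/-- Composition of slash actions corresponds to matrix multiplication:
`(P|γ)|γ' = P|(γγ')`. -/
lemma slashL_slashL (a b c d a' b' c' d' : ℚ) (P : MvPolynomial (Fin 2) ℚ) :
    slashL a' b' c' d' (slashL a b c d P)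
      = slashL (a*a'+b*c') (a*b'+b*d') (c*a'+d*c') (c*b'+d*d') P := by
  have h : (MvPolynomial.aeval
        ![a' • (X 0 : MvPolynomial (Fin 2) ℚ) + b' • X 1, c' • X 0 + d' • X 1]).comp
      (MvPolynomial.aeval ![a • (X 0 : MvPolynomial (Fin 2) ℚ) + b • X 1, c • X 0 + d • X 1])
      = MvPolynomial.aeval
        ![(a*a'+b*c') • (X 0 : MvPolynomial (Fin 2) ℚ) + (a*b'+b*d') • X 1,
          (c*a'+d*c') • X 0 + (c*b'+d*d') • X 1] := by
    apply MvPolynomial.algHom_ext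
    intro i
    fin_cases i <;> simp [smul_add, smul_smul] <;> ring_nf <;> module
  simpa only [slashL, AlgHom.toLinearMap_apply, ← AlgHom.comp_apply] using
    DFunLike.congr_fun h P

/-- For even `w`, the even period polynomials are exactly the even homogeneous
polynomials `P` of degree `w` satisfying the single functional equation
`P(X,Y) - P(Y-X,Y) + P(Y-X,X) = 0`. -/
theorem even_period_polynomials_single_equation (w : ℕ) (hw : Even w) :
    WwPlus w =
      (Vw w ⊓ LinearMap.ker (slashL (-1) 0 0 1 - LinearMap.id)) ⊓
        LinearMap.ker (LinearMap.id - slashL (-1) 1 0 1 + slashL (-1) 1 1 0) := by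
  ext P
  simp only [WwPlus, Ww, Submodule.mem_inf, LinearMap.mem_ker, LinearMap.add_apply,
    LinearMap.sub_apply, LinearMap.id_apply, sub_eq_zero]
  constructor
  · rintro ⟨⟨⟨hV, hS⟩, hU⟩, hε⟩
    refine ⟨⟨hV, hε⟩, ?_⟩
    -- Evenness: `P|(εγ) = P|γ`; here `ε·U = [[-1,1],[1,0]]`.
    have e2 : slashL (-1) 1 1 0 P = slashL 1 (-1) 1 0 P := by
      have h := slashL_slashL (-1) 0 0 1 1 (-1) 1 0 P
      rw [hε] at h; norm_num at h; exact h.symm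
    -- Evenness: `ε·U² = [[0,1],[1,-1]]`.
    have e3 : slashL 0 1 1 (-1) P = slashL 0 (-1) 1 (-1) P := by
      have h := slashL_slashL (-1) 0 0 1 0 (-1) 1 (-1) P
      rw [hε] at h; norm_num at h; exact h.symm
    have hSP : slashL 0 (-1) 1 0 P = -P := by linear_combination hS
    -- `T' = [[-1,1],[0,1]] = S·(εU²)`, so `P|T' = (P|S)|(εU²) = -P|U²`.
    have e4 : slashL (-1) 1 0 1 P = - slashL 0 (-1) 1 (-1) P := by
      have h := slashL_slashL 0 (-1) 1 0 0 1 1 (-1) P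
      rw [hSP, map_neg] at h
      norm_num at h
      rw [e3] at h
      linear_combination -h
    rw [e2, e4]
    linear_combination hU
  · rintro ⟨⟨hV, hε⟩, hE⟩
    -- Evenness: `ε·T⁻¹ = [[-1,1],[0,1]] = T'`.
    have e1 : slashL (-1) 1 0 1 P = slashL 1 (-1) 0 1 P := by
      have h := slashL_slashL (-1) 0 0 1 1 (-1) 0 1 P
      rw [hε] at h; norm_num at h; exact h.symm
    have e2 : slashL (-1) 1 1 0 P = slashL 1 (-1) 1 0 P := by
      have h := slashL_slashL (-1) 0 0 1 1 (-1) 1 0 P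
      rw [hε] at h; norm_num at h; exact h.symm
    -- Evenness: `ε·S = σ = [[0,1],[1,0]]`.
    have e4 : slashL 0 1 1 0 P = slashL 0 (-1) 1 0 P := by
      have h := slashL_slashL (-1) 0 0 1 0 (-1) 1 0 P
      rw [hε] at h; norm_num at h; exact h.symm
    -- The single equation, rewritten ε-free: `P - P|T⁻¹ + P|U = 0`.
    have hE' : P - slashL 1 (-1) 0 1 P + slashL 1 (-1) 1 0 P = 0 := by
      rw [← e1, ← e2]; exact hE
    -- Compose on the right with `σ`.
    have hσ := congrArg (slashL 0 1 1 0) hE'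
    simp only [map_add, map_sub, map_zero, slashL_slashL] at hσ
    norm_num at hσ
    rw [e1, e2] at hσ
    -- This yields `P|S = -P`.
    have hS : P + slashL 0 (-1) 1 0 P = 0 := by
      rw [← e4]; linear_combination hσ + hE'
    -- Compose on the right with `U`, using `T⁻¹U = S` and `U·U = U²`.
    have hUc := congrArg (slashL 1 (-1) 1 0) hE'
    simp only [map_add, map_sub, map_zero, slashL_slashL] at hUc
    norm_num at hUc
    refine ⟨⟨⟨hV, hS⟩, ?_⟩, hε⟩
    linear_combination hUc + hS
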